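/- Let ℓ ≥ 4 be an integer and K a field. Then every K-isomorphism class of pairs (E, P), with E an elliptic curve over K and P ∈ E(K) a torsion point of order ℓ, contains a unique model in Tate normal form: there exist unique c ∈ K and b ∈ K^× such that the Weierstrass curve E_{(b,c)} : y² + (1−c)xy − by = x³ − bx² is nonsingular and (E, P) is K-isomorphic to (E_{(b,c)}, (0,0)). -/

import Mathlib

/-- The Tate normal form `E_{(b,c)} : y² + (1−c)xy − by = x³ − bx²` as a Weierstrass curve
(with marked point `(0, 0)`). -/
def tateNormalForm {K : Type*} [CommRing K] (b c : K) : WeierstrassCurve.Affine K :=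
  { a₁ := 1 - c, a₂ := -b, a₃ := -b, a₄ := 0, a₆ := 0 }

open WeierstrassCurve WeierstrassCurve.Affine

namespace TateNFAux

variable {K : Type*} [Field K]

lemma some_congr {W : WeierstrassCurve.Affine K} {x y x' y' : K}
    (hx : x = x') (hy : y = y') (h : W.Nonsingular x y) (h' : W.Nonsingular x' y') :
    Point.some _ _ h = Point.some _ _ h' := by subst hx; subst hy; rfl

lemma tate_unique {b₁ c₁ b₂ c₂ : K} (hb₁ : b₁ ≠ 0)
    (D : WeierstrassCurve.VariableChange K) (hr : D.r = 0) (ht : D.t = 0)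
    (hD : D • (tateNormalForm b₁ c₁) = tateNormalForm b₂ c₂) :
    b₁ = b₂ ∧ c₁ = c₂ := by
  have hv0 : ((D.u⁻¹ : Kˣ) : K) ≠ 0 := Units.ne_zero _
  have hv1 : ((D.u⁻¹ : Kˣ) : K) * (D.u : K) = 1 := D.u.inv_mul
  have h₁ := congrArg WeierstrassCurve.a₁ hD
  have h₂ := congrArg WeierstrassCurve.a₂ hD
  have h₃ := congrArg WeierstrassCurve.a₃ hD
  have h₄ := congrArg WeierstrassCurve.a₄ hD
  simp only [variableChange_a₁, variableChange_a₂, variableChange_a₃, variableChange_a₄,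
    tateNormalForm, hr, ht] at h₁ h₂ h₃ h₄
  -- derive s = 0
  have hs : D.s = 0 := by
    have h4' : ((D.u⁻¹ : Kˣ) : K) ^ 4 * (D.s * b₁) = 0 := by linear_combination h₄
    rcases mul_eq_zero.mp h4' with h | h
    · exact absurd h (pow_ne_zero _ hv0)
    · rcases mul_eq_zero.mp h with h | h
      · exact h
      · exact absurd h hb₁
  rw [hs] at h₁ h₂
  -- now v^2 * b₁ = b₂ and v^3 * b₁ = b₂
  have e2 : ((D.u⁻¹ : Kˣ) : K) ^ 2 * b₁ = b₂ := by linear_combination -h₂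
  have e3 : ((D.u⁻¹ : Kˣ) : K) ^ 3 * b₁ = b₂ := by linear_combination -h₃
  have hv : ((D.u⁻¹ : Kˣ) : K) = 1 := by
    have : ((D.u⁻¹ : Kˣ) : K) ^ 2 * (((D.u⁻¹ : Kˣ) : K) - 1) * b₁ = 0 := by
      linear_combination e3 - e2
    rcases mul_eq_zero.mp this with h | h
    · rcases mul_eq_zero.mp h with h | h
      · exact absurd h (pow_ne_zero _ hv0)
      · exact sub_eq_zero.mp h
    · exact absurd h hb₁
  constructor
  · rw [hv, one_pow, one_mul] at e2; exact e2
  · rw [hv, one_mul] at h₁; linear_combination -h₁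

end TateNFAux

open TateNFAux in
open Classical in
/-- Let `ℓ ≥ 4` and let `K` be a field.  Every `K`-isomorphism class of pairs `(E, P)`, with
`E` an elliptic curve over `K` (a Weierstrass curve with `Δ ≠ 0`) and `P ∈ E(K)` a torsion
point of order `ℓ`, contains a unique model in Tate normal form: there are unique `c ∈ K` and
`b ∈ K^×` such that `E_{(b,c)}` is nonsingular and `(E, P)` is `K`-isomorphic to
`(E_{(b,c)}, (0,0))`.  Here a `K`-isomorphism `(E, P) ≅ (E', P')` is an admissible change of
variables `(x, y) ↦ (u²x + r, u³y + u²sx + t)` taking `E` to `E'` and `P` to `P'`; it takes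
the affine point `P = (x₀, y₀)` to `(0, 0)` exactly when `r = x₀` and `t = y₀`. -/
theorem tateNormalForm_exists_unique {K : Type*} [Field K] (ℓ : ℕ) (hℓ : 4 ≤ ℓ)
    (E : WeierstrassCurve.Affine K) (hE : E.Δ ≠ 0) (P : E.Point)
    (hP : addOrderOf P = ℓ) :
    ∃! bc : K × K, bc.1 ≠ 0 ∧ (tateNormalForm bc.1 bc.2).Δ ≠ 0 ∧
      ∃ (x₀ y₀ : K) (h : E.Nonsingular x₀ y₀) (C : WeierstrassCurve.VariableChange K),
        P = WeierstrassCurve.Affine.Point.some x₀ y₀ h ∧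
        C • E = tateNormalForm bc.1 bc.2 ∧ C.r = x₀ ∧ C.t = y₀ := by
  rcases P with _ | @⟨x₀, y₀, h⟩
  · rw [← Point.zero_def, addOrderOf_zero] at hP; omega
  have horder : ∀ n : ℕ, 0 < n → n • Point.some _ _ h = 0 → ℓ ≤ n := fun n hn h0 =>
    Nat.le_of_dvd hn (hP ▸ addOrderOf_dvd_of_nsmul_eq_zero h0)
  have heq : y₀ ^ 2 + E.a₁ * x₀ * y₀ + E.a₃ * y₀
      = x₀ ^ 3 + E.a₂ * x₀ ^ 2 + E.a₄ * x₀ + E.a₆ := (E.equation_iff x₀ y₀).mp h.1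
  have hy : y₀ ≠ E.negY x₀ y₀ := by
    intro hy
    have h2 : (2 : ℕ) • Point.some _ _ h = 0 := by
      rw [two_nsmul]; exact Point.add_self_of_Y_eq hy
    have := horder 2 two_pos h2; omega
  have hd0 : 2 * y₀ + E.a₁ * x₀ + E.a₃ ≠ 0 := by
    have := sub_ne_zero.mpr hy
    rw [negY] at this
    intro hc; apply this; linear_combination hc
  set S := E.slope x₀ x₀ y₀ y₀ with hS
  have hSval : S * (2 * y₀ + E.a₁ * x₀ + E.a₃)
      = 3 * x₀ ^ 2 + 2 * E.a₂ * x₀ + E.a₄ - E.a₁ * y₀ := by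
    rw [hS, slope_of_Y_ne rfl hy, negY]
    rw [show y₀ - (-y₀ - E.a₁ * x₀ - E.a₃) = 2 * y₀ + E.a₁ * x₀ + E.a₃ by ring]
    exact div_mul_cancel₀ _ hd0
  have he : E.a₂ + 3 * x₀ - E.a₁ * S - S ^ 2 ≠ 0 := by
    intro he0
    have hx : E.addX x₀ x₀ S = x₀ := by rw [addX]; linear_combination -he0
    have h2 := nonsingular_add h h (fun hxy => hy hxy.right)
    have hadd : Point.some _ _ h + Point.some _ _ h = Point.some _ _ h2 := Point.add_self_of_Y_ne hy
    rcases Y_eq_of_X_eq h2.1 h.1 hx with hyy | hyn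
    · have hPP : Point.some _ _ h + Point.some _ _ h = Point.some _ _ h := by
        rw [hadd]; exact some_congr hx hyy _ _
      exact Point.some_ne_zero h (add_eq_right.mp hPP)
    · have h3 : (3 : ℕ) • Point.some _ _ h = 0 := by
        have hneg : Point.some _ _ h2 = -Point.some _ _ h := by
          rw [Point.neg_some]; exact some_congr hx hyn _ _
        rw [show (3 : ℕ) = 2 + 1 from rfl, add_nsmul, two_nsmul, one_nsmul, hadd, hneg,
          neg_add_cancel]
      have := horder 3 three_pos h3; omega
  -- the data
  set dd := 2 * y₀ + E.a₁ * x₀ + E.a₃ with hdd_def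
  set e := E.a₂ + 3 * x₀ - E.a₁ * S - S ^ 2 with he_def
  have hu : dd / e ≠ 0 := div_ne_zero hd0 he
  set bb : K := -(e ^ 3 / dd ^ 2) with hbb_def
  set cc : K := 1 - (E.a₁ + 2 * S) * e / dd with hcc_def
  have hbb : bb ≠ 0 :=
    neg_ne_zero.mpr (div_ne_zero (pow_ne_zero _ he) (pow_ne_zero _ hd0))
  set C₀ : WeierstrassCurve.VariableChange K := ⟨Units.mk0 (dd / e) hu, x₀, S, y₀⟩ with hC₀
  have hv : (((Units.mk0 (dd / e) hu)⁻¹ : Kˣ) : K) = e / dd := by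
    rw [Units.val_inv_eq_inv_val, Units.val_mk0, inv_div]
  have hT : C₀ • E = tateNormalForm bb cc := by
    ext
    · show (((Units.mk0 (dd / e) hu)⁻¹ : Kˣ) : K) * (E.a₁ + 2 * S) = 1 - cc
      rw [hv, hcc_def]
      field_simp
      ring
    · show (((Units.mk0 (dd / e) hu)⁻¹ : Kˣ) : K) ^ 2
          * (E.a₂ - S * E.a₁ + 3 * x₀ - S ^ 2) = -bb
      rw [hv, hbb_def, show E.a₂ - S * E.a₁ + 3 * x₀ - S ^ 2 = e from by rw [he_def]; ring]
      field_simp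
    · show (((Units.mk0 (dd / e) hu)⁻¹ : Kˣ) : K) ^ 3
          * (E.a₃ + x₀ * E.a₁ + 2 * y₀) = -bb
      rw [hv, hbb_def, show E.a₃ + x₀ * E.a₁ + 2 * y₀ = dd from by rw [hdd_def]; ring]
      field_simp
    · show (((Units.mk0 (dd / e) hu)⁻¹ : Kˣ) : K) ^ 4 * (E.a₄ - S * E.a₃ + 2 * x₀ * E.a₂
          - (y₀ + x₀ * S) * E.a₁ + 3 * x₀ ^ 2 - 2 * S * y₀) = 0
      rw [show E.a₄ - S * E.a₃ + 2 * x₀ * E.a₂ - (y₀ + x₀ * S) * E.a₁ + 3 * x₀ ^ 2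
          - 2 * S * y₀ = 0 from by linear_combination -hSval - S * hdd_def, mul_zero]
    · show (((Units.mk0 (dd / e) hu)⁻¹ : Kˣ) : K) ^ 6 * (E.a₆ + x₀ * E.a₄ + x₀ ^ 2 * E.a₂
          + x₀ ^ 3 - y₀ * E.a₃ - y₀ ^ 2 - x₀ * y₀ * E.a₁) = 0
      rw [show E.a₆ + x₀ * E.a₄ + x₀ ^ 2 * E.a₂ + x₀ ^ 3 - y₀ * E.a₃ - y₀ ^ 2
          - x₀ * y₀ * E.a₁ = 0 from by linear_combination -heq, mul_zero]
  refine ⟨(bb, cc), ⟨hbb, ?_, x₀, y₀, h, C₀, rfl, hT, rfl, rfl⟩, ?_⟩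
  · rw [← hT, variableChange_Δ]
    exact mul_ne_zero (pow_ne_zero _ (Units.ne_zero _)) hE
  · rintro ⟨b₂, c₂⟩ ⟨hb₂, hΔ₂, x₁, y₁, h₁, C₁, hP₁, hT₁, hr₁, ht₁⟩
    injection hP₁ with hx hy
    subst hx
    subst hy
    set D := C₁ * C₀⁻¹ with hD_def
    have hDr : D.r = 0 := by
      simp only [hD_def, WeierstrassCurve.VariableChange.mul_def,
        WeierstrassCurve.VariableChange.inv_def, hC₀, hr₁]
      ring
    have hDt : D.t = 0 := by
      simp only [hD_def, WeierstrassCurve.VariableChange.mul_def,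
        WeierstrassCurve.VariableChange.inv_def, hC₀, hr₁, ht₁]
      ring
    have hcomp : D * C₀ = C₁ := by
      rw [hD_def, mul_assoc,
        inv_mul_cancel,
        mul_one]
    have hDT : D • (tateNormalForm bb cc) = tateNormalForm b₂ c₂ := by
      rw [← hT, ← mul_smul, hcomp, hT₁]
    obtain ⟨hb, hc⟩ := tate_unique hbb D hDr hDt hDT
    exact Prod.ext hb.symm hc.symm
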